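/- Let χ be a Dirichlet character modulo q, and let λ : ℕ₊ → ℂ satisfy λ(1) = 1 and the Hecke relation λ(m) λ(n) = Σ_{d ∣ gcd(m,n)} χ(d) λ(mn/d²) for all m, n ≥ 1, together with the growth bound |λ(n)| ≤ n^σ for some σ ≥ 0. Let ℓ be a positive integer with gcd(ℓ, q) = 1 and let w ∈ ℂ with Re w > σ + 1. Then ℓ^{−w} · ( Σ_{ℓ₁ℓ₂ = ℓ} μ(ℓ₁) χ(ℓ₁) λ(ℓ₂) ℓ₁^{−w} ) · ( Σ_{r ≥ 1, gcd(r,q)=1} λ(r) r^{−w} ) = Σ_{r ≥ 1, gcd(r,q)=1, ℓ ∣ r} λ(r) r^{−w}, all series converging absolutely. -/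

import Mathlib

open Complex

private lemma cpowmul (w : ℂ) (a b : ℕ) :
    ((a * b : ℕ) : ℂ) ^ (-w) = (a:ℂ)^(-w) * (b:ℂ)^(-w) := by
  rw [Nat.cast_mul]; exact Complex.natCast_mul_natCast_cpow a b (-w)

private lemma summable_master {σ : ℝ} {w : ℂ} (hw : σ + 1 < w.re)
    (C : ℝ) (u : ℕ → ℂ)
    (hu : ∀ r : ℕ, ‖u r‖ ≤ C * (r:ℝ) ^ (σ - w.re)) :
    Summable fun r => ‖u r‖ := by
  have h : Summable fun r : ℕ => C * (r:ℝ) ^ (σ - w.re) :=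
    (Real.summable_nat_rpow.mpr (by linarith)).mul_left C
  exact Summable.of_nonneg_of_le (fun r => norm_nonneg _) hu h

private lemma abs_natCast_cpow_neg {w : ℂ} {r : ℕ} (hr : 0 < r) :
    ‖(r:ℂ)^(-w)‖ = (r:ℝ)^(-w.re) := by
  simpa using Complex.norm_natCast_cpow_of_pos hr (-w)

private lemma term_bound {σ : ℝ} {w : ℂ} {lam : ℕ → ℂ}
    (hgrowth : ∀ n : ℕ, 0 < n → ‖lam n‖ ≤ (n:ℝ)^σ)
    {r : ℕ} (hr : 0 < r) :
    ‖lam r * (r:ℂ)^(-w)‖ ≤ (r:ℝ)^(σ - w.re) := by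
  rw [norm_mul, abs_natCast_cpow_neg hr, sub_eq_add_neg,
    Real.rpow_add (by exact_mod_cast hr)]
  exact mul_le_mul_of_nonneg_right (hgrowth r hr) (Real.rpow_nonneg (Nat.cast_nonneg r) _)

private lemma hmoeb (n : ℕ) :
    ∑ a ∈ n.divisors, ((ArithmeticFunction.moebius a : ℤ) : ℂ) = if n = 1 then 1 else 0 := by
  have h := congrArg (fun f : ArithmeticFunction ℂ => f n)
    (ArithmeticFunction.coe_moebius_mul_coe_zeta (R := ℂ))
  simp only [ArithmeticFunction.coe_mul_zeta_apply, ArithmeticFunction.intCoe_apply,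
    ArithmeticFunction.one_apply] at h
  exact h

private lemma reindex {w : ℂ} {q : ℕ} (d : ℕ) (hd0 : 0 < d) (hdq : Nat.Coprime d q) (g : ℕ → ℂ) :
    ∑' r : ℕ, (if 0 < r ∧ Nat.Coprime r q ∧ d ∣ r then g (r / d) * (r:ℂ)^(-w) else 0)
      = (d:ℂ)^(-w) * ∑' m : ℕ, (if 0 < m ∧ Nat.Coprime m q then g m * (m:ℂ)^(-w) else 0) := by
  rw [← tsum_mul_left]
  have hinj : Function.Injective (fun m : ℕ => d * m) := fun a b h => by
    simpa using Nat.eq_of_mul_eq_mul_left hd0 h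
  rw [← Function.Injective.tsum_eq hinj ?_]
  · apply tsum_congr
    intro m
    by_cases hm : 0 < m ∧ Nat.Coprime m q
    · rw [if_pos ⟨Nat.mul_pos hd0 hm.1, (Nat.coprime_mul_iff_left).mpr ⟨hdq, hm.2⟩,
        dvd_mul_right d m⟩, if_pos hm]
      rw [Nat.mul_div_cancel_left m hd0, cpowmul w d m]
      ring
    · rw [if_neg hm, mul_zero, if_neg]
      rintro ⟨h1, h2, -⟩
      exact hm ⟨Nat.pos_of_ne_zero (fun h => by simp [h] at h1),
        (Nat.coprime_mul_iff_left.mp h2).2⟩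
  · intro r hr
    rw [Function.mem_support] at hr
    by_contra hcon
    apply hr
    rw [if_neg]
    rintro ⟨-, -, hdr⟩
    obtain ⟨m, rfl⟩ := hdr
    exact hcon ⟨m, rfl⟩



/-- For a function `λ` satisfying the Hecke relations with nebentypus `χ` modulo `q`
and polynomial growth, and `ℓ` coprime to `q`, Möbius inversion gives
`ℓ^{−w} (Σ_{ℓ₁ℓ₂=ℓ} μ(ℓ₁) χ(ℓ₁) λ(ℓ₂) ℓ₁^{−w}) (Σ_{(r,q)=1} λ(r) r^{−w})
  = Σ_{(r,q)=1, ℓ∣r} λ(r) r^{−w}`, all series converging absolutely. -/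
theorem hecke_mobius_sieve
    (q : ℕ) (χ : DirichletCharacter ℂ q) (lam : ℕ → ℂ) (σ : ℝ) (hσ : 0 ≤ σ)
    (hlam1 : lam 1 = 1)
    (hecke : ∀ m n : ℕ, 0 < m → 0 < n →
      lam m * lam n
        = ∑ d ∈ (Nat.gcd m n).divisors, χ (d : ZMod q) * lam (m * n / d ^ 2))
    (hgrowth : ∀ n : ℕ, 0 < n → ‖lam n‖ ≤ (n : ℝ) ^ σ)
    (ℓ : ℕ) (hℓ : 0 < ℓ) (hℓq : Nat.Coprime ℓ q)
    (w : ℂ) (hw : σ + 1 < w.re) :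
    Summable (fun r : ℕ => ‖
      (if 0 < r ∧ Nat.Coprime r q then lam r * (r : ℂ) ^ (-w) else 0)‖) ∧
    Summable (fun r : ℕ => ‖
      (if 0 < r ∧ Nat.Coprime r q ∧ ℓ ∣ r then lam r * (r : ℂ) ^ (-w) else 0)‖) ∧
    (ℓ : ℂ) ^ (-w) *
        (∑ p ∈ ℓ.divisorsAntidiagonal,
          (ArithmeticFunction.moebius p.1 : ℂ) * χ (p.1 : ZMod q) * lam p.2 *
            (p.1 : ℂ) ^ (-w)) *
        (∑' r : ℕ, if 0 < r ∧ Nat.Coprime r q then lam r * (r : ℂ) ^ (-w) else 0)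
      = ∑' r : ℕ, if 0 < r ∧ Nat.Coprime r q ∧ ℓ ∣ r then lam r * (r : ℂ) ^ (-w) else 0 := by
  have hsum1 : Summable (fun r : ℕ => ‖
      (if 0 < r ∧ Nat.Coprime r q then lam r * (r : ℂ) ^ (-w) else 0)‖) := by
    apply summable_master hw 1
    intro r
    rw [one_mul]
    split_ifs with h
    · exact term_bound hgrowth h.1
    · rw [norm_zero]; positivity
  have hsum2 : Summable (fun r : ℕ => ‖
      (if 0 < r ∧ Nat.Coprime r q ∧ ℓ ∣ r then lam r * (r : ℂ) ^ (-w) else 0)‖) := by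
    apply summable_master hw 1
    intro r
    rw [one_mul]
    split_ifs with h
    · exact term_bound hgrowth h.1
    · rw [norm_zero]; positivity
  refine ⟨hsum1, hsum2, ?_⟩
  set S : ℕ → ℂ :=
    fun e => ∑' m : ℕ, if 0 < m ∧ Nat.Coprime m q then lam (e * m) * (m:ℂ)^(-w) else 0
    with hSdef
  -- the key Hecke identity
  have keyA : ∀ e : ℕ, 0 < e → Nat.Coprime e q →
      lam e * (∑' r : ℕ, if 0 < r ∧ Nat.Coprime r q then lam r * (r:ℂ)^(-w) else 0)
        = ∑ d ∈ e.divisors, χ (d : ZMod q) * ((d:ℂ)^(-w) * S (e / d)) := by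
    intro e he heq
    rw [← tsum_mul_left]
    have hgcd : ∀ r : ℕ, (Nat.gcd e r).divisors = e.divisors.filter (· ∣ r) := by
      intro r
      ext a
      simp only [Nat.mem_divisors, Finset.mem_filter, Nat.dvd_gcd_iff, Nat.gcd_eq_zero_iff]
      constructor
      · rintro ⟨⟨h1, h2⟩, -⟩
        exact ⟨⟨h1, he.ne'⟩, h2⟩
      · rintro ⟨⟨h1, -⟩, h3⟩
        refine ⟨⟨h1, h3⟩, ?_⟩
        simp [Nat.gcd_eq_zero_iff, he.ne']
    have hpt : ∀ r : ℕ,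
        lam e * (if 0 < r ∧ Nat.Coprime r q then lam r * (r:ℂ)^(-w) else 0)
          = ∑ d ∈ e.divisors,
              (if 0 < r ∧ Nat.Coprime r q ∧ d ∣ r
                then χ (d:ZMod q) * (lam (e * r / d^2) * (r:ℂ)^(-w)) else 0) := by
      intro r
      by_cases hr : 0 < r ∧ Nat.Coprime r q
      · rw [if_pos hr, ← mul_assoc, hecke e r he hr.1, Finset.sum_mul, hgcd r,
          Finset.sum_filter]
        refine Finset.sum_congr rfl fun d hd => ?_
        by_cases hdr : d ∣ r
        · rw [if_pos hdr, if_pos ⟨hr.1, hr.2, hdr⟩, mul_assoc]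
        · rw [if_neg hdr, if_neg (fun hc => hdr hc.2.2)]
      · rw [if_neg hr, mul_zero]
        exact (Finset.sum_eq_zero fun d hd => if_neg (fun hc => hr ⟨hc.1, hc.2.1⟩)).symm
    rw [tsum_congr hpt, Summable.tsum_finsetSum ?_]
    · refine Finset.sum_congr rfl fun d hd => ?_
      obtain ⟨hde, -⟩ := Nat.mem_divisors.mp hd
      have hd0 : 0 < d := Nat.pos_of_dvd_of_pos hde he
      have hdq : Nat.Coprime d q := Nat.Coprime.coprime_dvd_left hde heq
      obtain ⟨e', rfl⟩ := hde
      rw [Nat.mul_div_cancel_left e' hd0]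
      have h1 : ∀ r : ℕ, (if 0 < r ∧ Nat.Coprime r q ∧ d ∣ r
            then χ (d:ZMod q) * (lam (d * e' * r / d^2) * (r:ℂ)^(-w)) else 0)
          = χ (d:ZMod q) * (if 0 < r ∧ Nat.Coprime r q ∧ d ∣ r
            then (fun t => lam (e' * t)) (r/d) * (r:ℂ)^(-w) else 0) := by
        intro r
        split_ifs with h
        · obtain ⟨m, rfl⟩ := h.2.2
          rw [Nat.mul_div_cancel_left m hd0]
          rw [show d * e' * (d * m) / d^2 = e' * m by
            rw [pow_two, show d * e' * (d * m) = d * d * (e' * m) by ring,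
              Nat.mul_div_cancel_left _ (Nat.mul_pos hd0 hd0)]]
        · rw [mul_zero]
      rw [tsum_congr h1, tsum_mul_left, reindex d hd0 hdq (fun t => lam (e' * t)), hSdef]
    · -- summability of each inner series
      intro d hd
      obtain ⟨hde, -⟩ := Nat.mem_divisors.mp hd
      have hd0 : 0 < d := Nat.pos_of_dvd_of_pos hde he
      apply Summable.of_norm
      apply summable_master hw ((e:ℝ)^σ)
      intro r
      split_ifs with h
      · have herpos : 0 < e * r / d^2 := by
          apply Nat.div_pos (Nat.le_of_dvd (Nat.mul_pos he h.1) ?_) (by positivity)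
          rw [pow_two]
          exact mul_dvd_mul hde h.2.2
        have hb1 : ‖χ (d:ZMod q) * (lam (e * r / d^2) * (r:ℂ)^(-w))‖
            ≤ ‖lam (e * r / d^2) * (r:ℂ)^(-w)‖ := by
          rw [norm_mul]
          apply mul_le_of_le_one_left (norm_nonneg _)
          exact χ.norm_le_one _
        refine hb1.trans ?_
        rw [norm_mul, abs_natCast_cpow_neg h.1]
        have hb2 : ‖lam (e * r / d^2)‖ ≤ (e:ℝ)^σ * (r:ℝ)^σ := by
          refine (hgrowth _ herpos).trans ?_
          rw [← Real.mul_rpow (by positivity) (by positivity)]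
          apply Real.rpow_le_rpow (by positivity) ?_ hσ
          calc ((e * r / d^2 : ℕ) : ℝ) ≤ ((e * r : ℕ) : ℝ) := by
                exact_mod_cast Nat.div_le_self (e * r) (d^2)
            _ = (e:ℝ) * (r:ℝ) := by push_cast; ring
        calc ‖lam (e * r / d^2)‖ * (r:ℝ)^(-w.re)
            ≤ ((e:ℝ)^σ * (r:ℝ)^σ) * (r:ℝ)^(-w.re) :=
              mul_le_mul_of_nonneg_right hb2 (Real.rpow_nonneg (Nat.cast_nonneg r) _)
          _ = (e:ℝ)^σ * (r:ℝ)^(σ - w.re) := by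
              rw [mul_assoc, ← Real.rpow_add (by exact_mod_cast h.1), sub_eq_add_neg]
      · rw [norm_zero]; positivity
  -- rewrite the right-hand side
  have hRHS : (∑' r : ℕ, if 0 < r ∧ Nat.Coprime r q ∧ ℓ ∣ r then lam r * (r:ℂ)^(-w) else 0)
      = (ℓ:ℂ)^(-w) * S ℓ := by
    have h1 : ∀ r : ℕ, (if 0 < r ∧ Nat.Coprime r q ∧ ℓ ∣ r then lam r * (r:ℂ)^(-w) else 0)
        = (if 0 < r ∧ Nat.Coprime r q ∧ ℓ ∣ r
            then (fun t => lam (ℓ * t)) (r/ℓ) * (r:ℂ)^(-w) else 0) := by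
      intro r
      split_ifs with h
      · rw [show (fun t => lam (ℓ * t)) (r/ℓ) = lam r by
          simp only []; rw [Nat.mul_div_cancel' h.2.2]]
      · rfl
    rw [tsum_congr h1, reindex ℓ hℓ hℓq (fun t => lam (ℓ * t)), hSdef]
  rw [hRHS, mul_assoc]
  congr 1
  -- arithmetic functions
  set F : ArithmeticFunction ℂ :=
    ⟨fun n => ((ArithmeticFunction.moebius n : ℤ) : ℂ) * χ (n:ZMod q) * (n:ℂ)^(-w), by simp⟩
    with hFdef
  set G : ArithmeticFunction ℂ :=
    ⟨fun n => if n = 0 then 0 else χ (n:ZMod q) * (n:ℂ)^(-w), by simp⟩ with hGdef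
  set H : ArithmeticFunction ℂ :=
    ⟨fun n => if n = 0 then 0 else S n, by simp⟩ with hHdef
  have hL1 : (∑ p ∈ ℓ.divisorsAntidiagonal,
        (ArithmeticFunction.moebius p.1 : ℂ) * χ (p.1 : ZMod q) * lam p.2 * (p.1:ℂ)^(-w)) *
        (∑' r : ℕ, if 0 < r ∧ Nat.Coprime r q then lam r * (r:ℂ)^(-w) else 0)
      = ∑ p ∈ ℓ.divisorsAntidiagonal, F p.1 * ((G * H) p.2) := by
    rw [Finset.sum_mul]
    refine Finset.sum_congr rfl fun p hp => ?_
    obtain ⟨hpe, hne⟩ := Nat.mem_divisorsAntidiagonal.mp hp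
    have hp2 : p.2 ∣ ℓ := Dvd.intro_left p.1 hpe
    have hp2pos : 0 < p.2 := Nat.pos_of_ne_zero (Nat.right_ne_zero_of_mem_divisorsAntidiagonal hp)
    have hp2q : Nat.Coprime p.2 q := Nat.Coprime.coprime_dvd_left hp2 hℓq
    have hGH : (G * H) p.2 = ∑ d ∈ p.2.divisors, χ (d:ZMod q) * ((d:ℂ)^(-w) * S (p.2/d)) := by
      rw [ArithmeticFunction.mul_apply, Nat.sum_divisorsAntidiagonal (fun a b => G a * H b)]
      refine Finset.sum_congr rfl fun d hd => ?_
      obtain ⟨hdd, -⟩ := Nat.mem_divisors.mp hd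
      have hd0 : d ≠ 0 := (Nat.pos_of_dvd_of_pos hdd hp2pos).ne'
      have he0 : p.2 / d ≠ 0 :=
        (Nat.div_pos (Nat.le_of_dvd hp2pos hdd) (Nat.pos_of_dvd_of_pos hdd hp2pos)).ne'
      rw [hGdef, hHdef]
      simp only [ArithmeticFunction.coe_mk]
      rw [if_neg hd0, if_neg he0, mul_assoc]
    rw [hGH, ← keyA p.2 hp2pos hp2q, hFdef]
    simp only [ArithmeticFunction.coe_mk]
    ring
  rw [hL1]
  have hassoc : ∑ p ∈ ℓ.divisorsAntidiagonal, F p.1 * ((G * H) p.2)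
      = ∑ p ∈ ℓ.divisorsAntidiagonal, ((F * G) p.1) * H p.2 := by
    calc ∑ p ∈ ℓ.divisorsAntidiagonal, F p.1 * ((G * H) p.2)
        = (F * (G * H)) ℓ := (ArithmeticFunction.mul_apply).symm
      _ = ((F * G) * H) ℓ := by rw [mul_assoc]
      _ = _ := ArithmeticFunction.mul_apply
  rw [hassoc]
  have hFG : ∀ g : ℕ, g ≠ 0 → (F * G) g = if g = 1 then 1 else 0 := by
    intro g hg
    rw [ArithmeticFunction.mul_apply]
    have hterm : ∀ p ∈ g.divisorsAntidiagonal, F p.1 * G p.2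
        = ((ArithmeticFunction.moebius p.1 : ℤ) : ℂ) * (χ (g:ZMod q) * (g:ℂ)^(-w)) := by
      intro p hp
      obtain ⟨hpe, -⟩ := Nat.mem_divisorsAntidiagonal.mp hp
      have h2 : p.2 ≠ 0 := Nat.right_ne_zero_of_mem_divisorsAntidiagonal hp
      rw [hFdef, hGdef]
      simp only [ArithmeticFunction.coe_mk]
      rw [if_neg h2, ← hpe]
      have hχ : χ ((p.1 * p.2 : ℕ) : ZMod q) = χ (p.1 : ZMod q) * χ (p.2 : ZMod q) := by
        push_cast
        exact map_mul χ _ _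
      rw [hχ, cpowmul w p.1 p.2]
      ring
    rw [Finset.sum_congr rfl hterm, ← Finset.sum_mul,
      Nat.sum_divisorsAntidiagonal (fun a b => ((ArithmeticFunction.moebius a : ℤ) : ℂ)),
      hmoeb g]
    split_ifs with h
    · subst h
      rw [one_mul]
      norm_num
    · rw [zero_mul]
  rw [Finset.sum_eq_single (1, ℓ)]
  · rw [hFG 1 one_ne_zero, if_pos rfl, one_mul, hHdef]
    simp only [ArithmeticFunction.coe_mk]
    rw [if_neg hℓ.ne']
  · intro p hp hne
    obtain ⟨hpe, -⟩ := Nat.mem_divisorsAntidiagonal.mp hp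
    have hp1 : p.1 ≠ 1 := by
      rintro h1
      apply hne
      have : p.2 = ℓ := by rw [← hpe, h1, one_mul]
      exact Prod.ext h1 this
    rw [hFG p.1 (Nat.left_ne_zero_of_mem_divisorsAntidiagonal hp), if_neg hp1, zero_mul]
  · intro h
    exact absurd (Nat.mem_divisorsAntidiagonal.mpr ⟨one_mul ℓ, hℓ.ne'⟩) h
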